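/- arXiv:1901.03227 — 3 statements merged into one kernel-verified Lean document; each statement's English description precedes it below -/
import Mathlib

section
/- Define h(z,z') = (γ²/(2+γ²))^{d/2} - (γ²/(1+γ²))^{d/2}exp(-‖z‖²/(2(1+γ²))) - (γ²/(1+γ²))^{d/2}exp(-‖z'‖²/(2(1+γ²))) + exp(-‖z-z'‖²/(2γ²)). For Z, Z' independent standard d-variate normals, E[h(Z,Z')²] = (γ²/(2+γ²))^d + (γ²/(4+γ²))^{d/2} - 2(γ⁴/((1+γ²)(3+γ²)))^{d/2}. -/
open MeasureTheory Real Complex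
open scoped RealInnerProductSpace

section helpers
variable {V : Type*} [NormedAddCommGroup V] [InnerProductSpace ℝ V] [FiniteDimensional ℝ V]
  [MeasurableSpace V] [BorelSpace V]

theorem real_gauss (b : ℝ) (hb : 0 < b) (c : ℝ) (w : V) :
    ∫ v : V, rexp (-b * ‖v‖ ^ 2 + c * ⟪w, v⟫) =
      (π / b) ^ ((Module.finrank ℝ V : ℝ) / 2) * rexp (c ^ 2 * ‖w‖ ^ 2 / (4 * b)) := by
  rw [← Complex.ofReal_inj]
  convert GaussianFourier.integral_cexp_neg_mul_sq_norm_add (V := V)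
    (b := (b : ℂ)) (by simpa using hb) (c : ℂ) w using 1
  · change ofRealLI (∫ v : V, rexp (-b * ‖v‖ ^ 2 + c * ⟪w, v⟫)) = _
    rw [← ofRealLI.integral_comp_comm]
    congr 1 with v
    show ((rexp (-b * ‖v‖ ^ 2 + c * ⟪w, v⟫) : ℝ) : ℂ) = _
    rw [Complex.ofReal_exp]
    congr 1
    push_cast
    ring
  · push_cast [← Complex.ofReal_exp, Complex.ofReal_cpow (by positivity : (0:ℝ) ≤ π / b)]
    push_cast
    ring_nf

theorem real_gauss_integrable (b : ℝ) (hb : 0 < b) (c : ℝ) (w : V) :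
    Integrable (fun v : V => rexp (-b * ‖v‖ ^ 2 + c * ⟪w, v⟫)) := by
  have h := GaussianFourier.integrable_cexp_neg_mul_sq_norm_add (V := V)
    (b := (b : ℂ)) (by simpa using hb) (c : ℂ) w
  have h2 := h.re
  convert h2 using 2 with v
  simp only [RCLike.re_to_complex]
  rw [show (-(b:ℂ) * (‖v‖:ℂ) ^ 2 + (c:ℂ) * (⟪w, v⟫ : ℂ)) = ((-b * ‖v‖ ^ 2 + c * ⟪w, v⟫ : ℝ) : ℂ) by
    push_cast; ring]
  rw [Complex.exp_ofReal_re]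
end helpers

section euclid
variable {d : ℕ}

theorem aux_integrable (p r : ℝ) (hp : 0 < p) (hr : 0 ≤ r) (z : EuclideanSpace ℝ (Fin d)) :
    Integrable (fun z' : EuclideanSpace ℝ (Fin d) =>
      rexp (-(p * ‖z'‖ ^ 2) - r * ‖z - z'‖ ^ 2)) := by
  have heq : (fun z' : EuclideanSpace ℝ (Fin d) => rexp (-(p * ‖z'‖ ^ 2) - r * ‖z - z'‖ ^ 2))
      = fun z' => rexp (-(r * ‖z‖ ^ 2)) * rexp (-(p + r) * ‖z'‖ ^ 2 + (2 * r) * ⟪z, z'⟫) := by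
    funext z'
    rw [← Real.exp_add]
    congr 1
    rw [norm_sub_sq_real]
    ring
  rw [heq]
  exact (real_gauss_integrable (p + r) (by linarith) (2 * r) z).const_mul _

theorem aux_integral (p r : ℝ) (hp : 0 < p) (hr : 0 ≤ r) (z : EuclideanSpace ℝ (Fin d)) :
    ∫ z' : EuclideanSpace ℝ (Fin d), rexp (-(p * ‖z'‖ ^ 2) - r * ‖z - z'‖ ^ 2)
      = (π / (p + r)) ^ ((d : ℝ) / 2) * rexp (-(p * r / (p + r)) * ‖z‖ ^ 2) := by
  have heq : (fun z' : EuclideanSpace ℝ (Fin d) => rexp (-(p * ‖z'‖ ^ 2) - r * ‖z - z'‖ ^ 2))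
      = fun z' => rexp (-(r * ‖z‖ ^ 2)) * rexp (-(p + r) * ‖z'‖ ^ 2 + (2 * r) * ⟪z, z'⟫) := by
    funext z'
    rw [← Real.exp_add]
    congr 1
    rw [norm_sub_sq_real]
    ring
  rw [heq, integral_const_mul _ _, real_gauss (p + r) (by linarith) (2 * r) z]
  have hfr : ((Module.finrank ℝ (EuclideanSpace ℝ (Fin d)) : ℝ)) = (d : ℝ) := by simp
  rw [hfr]
  rw [mul_comm, mul_assoc, ← Real.exp_add]
  congr 2
  field_simp
  ring

theorem g1_integrable (p : ℝ) (hp : 0 < p) :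
    Integrable (fun v : EuclideanSpace ℝ (Fin d) => rexp (-(p * ‖v‖ ^ 2))) := by
  have h := real_gauss_integrable (V := EuclideanSpace ℝ (Fin d)) p hp 0 0
  simpa [neg_mul] using h

theorem g1_integral (p : ℝ) (hp : 0 < p) :
    ∫ v : EuclideanSpace ℝ (Fin d), rexp (-(p * ‖v‖ ^ 2)) = (π / p) ^ ((d : ℝ) / 2) := by
  have h := real_gauss (V := EuclideanSpace ℝ (Fin d)) p hp 0 0
  simpa [neg_mul] using h
end euclid

theorem integral_comb6 {α : Type*} [MeasurableSpace α] {μ : Measure α}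
    {f1 f2 f3 f4 f5 f6 : α → ℝ}
    (h1 : Integrable f1 μ) (h2 : Integrable f2 μ) (h3 : Integrable f3 μ)
    (h4 : Integrable f4 μ) (h5 : Integrable f5 μ) (h6 : Integrable f6 μ)
    (c1 c2 c3 c4 c5 c6 : ℝ) :
    ∫ x, (c1 * f1 x + c2 * f2 x + c3 * f3 x + c4 * f4 x + c5 * f5 x + c6 * f6 x) ∂μ
      = c1 * (∫ x, f1 x ∂μ) + c2 * (∫ x, f2 x ∂μ) + c3 * (∫ x, f3 x ∂μ)
        + c4 * (∫ x, f4 x ∂μ) + c5 * (∫ x, f5 x ∂μ) + c6 * (∫ x, f6 x ∂μ) := by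
  have H1 := h1.const_mul c1; have H2 := h2.const_mul c2; have H3 := h3.const_mul c3
  have H4 := h4.const_mul c4; have H5 := h5.const_mul c5; have H6 := h6.const_mul c6
  have H12 : Integrable (fun x => c1 * f1 x + c2 * f2 x) μ := H1.add H2
  have H13 : Integrable (fun x => c1 * f1 x + c2 * f2 x + c3 * f3 x) μ := H12.add H3
  have H14 : Integrable (fun x => c1 * f1 x + c2 * f2 x + c3 * f3 x + c4 * f4 x) μ := H13.add H4
  have H15 : Integrable (fun x => c1 * f1 x + c2 * f2 x + c3 * f3 x + c4 * f4 x + c5 * f5 x) μ :=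
    H14.add H5
  rw [integral_add H15 H6, integral_add H14 H5, integral_add H13 H4, integral_add H12 H3,
      integral_add H1 H2, integral_const_mul _ _, integral_const_mul _ _, integral_const_mul _ _,
      integral_const_mul _ _, integral_const_mul _ _, integral_const_mul _ _]

theorem integral_comb5 {α : Type*} [MeasurableSpace α] {μ : Measure α}
    {f1 f2 f3 f4 f5 : α → ℝ}
    (h1 : Integrable f1 μ) (h2 : Integrable f2 μ) (h3 : Integrable f3 μ)
    (h4 : Integrable f4 μ) (h5 : Integrable f5 μ)
    (c1 c2 c3 c4 c5 : ℝ) :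
    ∫ x, (c1 * f1 x + c2 * f2 x + c3 * f3 x + c4 * f4 x + c5 * f5 x) ∂μ
      = c1 * (∫ x, f1 x ∂μ) + c2 * (∫ x, f2 x ∂μ) + c3 * (∫ x, f3 x ∂μ)
        + c4 * (∫ x, f4 x ∂μ) + c5 * (∫ x, f5 x ∂μ) := by
  have H1 := h1.const_mul c1; have H2 := h2.const_mul c2; have H3 := h3.const_mul c3
  have H4 := h4.const_mul c4; have H5 := h5.const_mul c5
  have H12 : Integrable (fun x => c1 * f1 x + c2 * f2 x) μ := H1.add H2
  have H13 : Integrable (fun x => c1 * f1 x + c2 * f2 x + c3 * f3 x) μ := H12.add H3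
  have H14 : Integrable (fun x => c1 * f1 x + c2 * f2 x + c3 * f3 x + c4 * f4 x) μ := H13.add H4
  rw [integral_add H14 H5, integral_add H13 H4, integral_add H12 H3,
      integral_add H1 H2, integral_const_mul _ _, integral_const_mul _ _, integral_const_mul _ _,
      integral_const_mul _ _, integral_const_mul _ _]

set_option maxHeartbeats 2000000 in
/-- Second moment of the `h`-kernel of the unbiased MMD estimator under the null:
`E[h(Z,Z')²] = (γ²/(2+γ²))^d + (γ²/(4+γ²))^{d/2} - 2(γ⁴/((1+γ²)(3+γ²)))^{d/2}`. -/
theorem mmd_h_second_moment (d : ℕ) (hd : 1 ≤ d) (γ : ℝ) (hγ : 0 < γ) :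
    (∫ z : EuclideanSpace ℝ (Fin d), ∫ z' : EuclideanSpace ℝ (Fin d),
        ((2 * π) ^ (-(d : ℝ) / 2) * Real.exp (-‖z‖ ^ 2 / 2)) *
        ((2 * π) ^ (-(d : ℝ) / 2) * Real.exp (-‖z'‖ ^ 2 / 2)) *
        ((γ ^ 2 / (2 + γ ^ 2)) ^ ((d : ℝ) / 2)
          - (γ ^ 2 / (1 + γ ^ 2)) ^ ((d : ℝ) / 2) * Real.exp (-‖z‖ ^ 2 / (2 * (1 + γ ^ 2)))
          - (γ ^ 2 / (1 + γ ^ 2)) ^ ((d : ℝ) / 2) * Real.exp (-‖z'‖ ^ 2 / (2 * (1 + γ ^ 2)))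
          + Real.exp (-‖z - z'‖ ^ 2 / (2 * γ ^ 2))) ^ 2)
      = (γ ^ 2 / (2 + γ ^ 2)) ^ (d : ℝ) + (γ ^ 2 / (4 + γ ^ 2)) ^ ((d : ℝ) / 2)
          - 2 * (γ ^ 4 / ((1 + γ ^ 2) * (3 + γ ^ 2))) ^ ((d : ℝ) / 2) := by
  have hne0 : γ ≠ 0 := ne_of_gt hγ
  have hne1 : (1 + γ ^ 2 : ℝ) ≠ 0 := by positivity
  have hne2 : (2 + γ ^ 2 : ℝ) ≠ 0 := by positivity
  have hne3 : (3 + γ ^ 2 : ℝ) ≠ 0 := by positivity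
  have hne4 : (4 + γ ^ 2 : ℝ) ≠ 0 := by positivity
  have hne5 : (1 + 3 * γ ^ 2 + γ ^ 4 : ℝ) ≠ 0 := by positivity
  set N := (2 * π) ^ (-(d : ℝ) / 2) with hN
  set A := (γ ^ 2 / (2 + γ ^ 2)) ^ ((d : ℝ) / 2) with hA
  set B := (γ ^ 2 / (1 + γ ^ 2)) ^ ((d : ℝ) / 2) with hB
  have hNval : (2 * π) ^ (-(d : ℝ) / 2) = ((2 * π)⁻¹) ^ ((d : ℝ) / 2) := by
    rw [Real.inv_rpow (by positivity), ← Real.rpow_neg (by positivity), neg_div]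
  have hstep : (fun z : EuclideanSpace ℝ (Fin d) => ∫ z' : EuclideanSpace ℝ (Fin d), (N * Real.exp (-‖z‖ ^ 2 / 2)) * (N * Real.exp (-‖z'‖ ^ 2 / 2)) * (A - B * Real.exp (-‖z‖ ^ 2 / (2 * (1 + γ ^ 2))) - B * Real.exp (-‖z'‖ ^ 2 / (2 * (1 + γ ^ 2))) + Real.exp (-‖z - z'‖ ^ 2 / (2 * γ ^ 2))) ^ 2)
      = fun z : EuclideanSpace ℝ (Fin d) => N * Real.exp (-‖z‖ ^ 2 / 2) * N * ((A - B * rexp (-‖z‖ ^ 2 / (2 * (1 + γ ^ 2)))) ^ 2 * ((π / ((1 / 2) + 0)) ^ ((d : ℝ) / 2) * rexp (-((1 / 2) * 0 / ((1 / 2) + 0)) * ‖z‖ ^ 2)) + (-2 * (A - B * rexp (-‖z‖ ^ 2 / (2 * (1 + γ ^ 2)))) * B) * ((π / ((1 / 2 + 1 / (2 * (1 + γ ^ 2))) + 0)) ^ ((d : ℝ) / 2) * rexp (-((1 / 2 + 1 / (2 * (1 + γ ^ 2))) * 0 / ((1 / 2 + 1 / (2 * (1 + γ ^ 2))) + 0))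 * ‖z‖ ^ 2)) + B ^ 2 * ((π / ((1 / 2 + 1 / (1 + γ ^ 2)) + 0)) ^ ((d : ℝ) / 2) * rexp (-((1 / 2 + 1 / (1 + γ ^ 2)) * 0 / ((1 / 2 + 1 / (1 + γ ^ 2)) + 0)) * ‖z‖ ^ 2)) + (2 * (A - B * rexp (-‖z‖ ^ 2 / (2 * (1 + γ ^ 2))))) * ((π / ((1 / 2) + (1 / (2 * γ ^ 2)))) ^ ((d : ℝ) / 2) * rexp (-((1 / 2) * (1 / (2 * γ ^ 2)) / ((1 / 2) + (1 / (2 * γ ^ 2)))) * ‖z‖ ^ 2)) + (-2 * B) * ((π / ((1 / 2 + 1 / (2 * (1 + γ ^ 2))) + (1 / (2 * γ ^ 2)))) ^ ((d : ℝ) / 2) * rexp (-((1 / 2 + 1 / (2 * (1 + γ ^ 2))) * (1 / (2 * γ ^ 2)) / ((1 / 2 + 1 / (2 * (1 + γ ^ 2))) + (1 / (2 * γ ^ 2)))) * ‖z‖ ^ 2)) + 1 * ((π / ((1 / 2) + (1 / γ ^ 2))) ^ ((d : ℝ) / 2) * rexp (-((1 / 2) * (1 / γ ^ 2) / ((1 /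 2) + (1 / γ ^ 2))) * ‖z‖ ^ 2))) := by
    funext z
    have hfun : (fun z' : EuclideanSpace ℝ (Fin d) => (N * Real.exp (-‖z‖ ^ 2 / 2)) * (N * Real.exp (-‖z'‖ ^ 2 / 2)) * (A - B * Real.exp (-‖z‖ ^ 2 / (2 * (1 + γ ^ 2))) - B * Real.exp (-‖z'‖ ^ 2 / (2 * (1 + γ ^ 2))) + Real.exp (-‖z - z'‖ ^ 2 / (2 * γ ^ 2))) ^ 2)
        = fun z' : EuclideanSpace ℝ (Fin d) => (N * Real.exp (-‖z‖ ^ 2 / 2) * N) * ((A - B * rexp (-‖z‖ ^ 2 / (2 * (1 + γ ^ 2)))) ^ 2 * rexp (-((1 / 2) * ‖z'‖ ^ 2) - 0 * ‖z - z'‖ ^ 2) + (-2 * (A - B * rexp (-‖z‖ ^ 2 / (2 * (1 + γ ^ 2)))) * B) * rexp (-((1 / 2 + 1 / (2 * (1 + γ ^ 2))) * ‖z'‖ ^ 2) - 0 * ‖z - z'‖ ^ 2) + B ^ 2 * rexp (-((1 / 2 + 1 / (1 + γ ^ 2)) * ‖z'‖ ^ 2) - 0 * ‖z - z'‖ ^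 2) + (2 * (A - B * rexp (-‖z‖ ^ 2 / (2 * (1 + γ ^ 2))))) * rexp (-((1 / 2) * ‖z'‖ ^ 2) - (1 / (2 * γ ^ 2)) * ‖z - z'‖ ^ 2) + (-2 * B) * rexp (-((1 / 2 + 1 / (2 * (1 + γ ^ 2))) * ‖z'‖ ^ 2) - (1 / (2 * γ ^ 2)) * ‖z - z'‖ ^ 2) + 1 * rexp (-((1 / 2) * ‖z'‖ ^ 2) - (1 / γ ^ 2) * ‖z - z'‖ ^ 2)) := by
      funext z'
      have E1 : rexp (-((1 / 2) * ‖z'‖ ^ 2) - 0 * ‖z - z'‖ ^ 2) = rexp (-‖z'‖ ^ 2 / 2) := by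
        congr 1; ring
      have E2 : rexp (-((1 / 2 + 1 / (2 * (1 + γ ^ 2))) * ‖z'‖ ^ 2) - 0 * ‖z - z'‖ ^ 2) = rexp (-‖z'‖ ^ 2 / 2) * rexp (-‖z'‖ ^ 2 / (2 * (1 + γ ^ 2))) := by
        rw [← Real.exp_add]; congr 1; field_simp; ring
      have E3 : rexp (-((1 / 2 + 1 / (1 + γ ^ 2)) * ‖z'‖ ^ 2) - 0 * ‖z - z'‖ ^ 2) = rexp (-‖z'‖ ^ 2 / 2) * (rexp (-‖z'‖ ^ 2 / (2 * (1 + γ ^ 2))) * rexp (-‖z'‖ ^ 2 / (2 * (1 + γ ^ 2)))) := by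
        rw [← Real.exp_add, ← Real.exp_add]; congr 1; field_simp; ring
      have E4 : rexp (-((1 / 2) * ‖z'‖ ^ 2) - (1 / (2 * γ ^ 2)) * ‖z - z'‖ ^ 2) = rexp (-‖z'‖ ^ 2 / 2) * rexp (-‖z - z'‖ ^ 2 / (2 * γ ^ 2)) := by
        rw [← Real.exp_add]; congr 1; field_simp; ring
      have E5 : rexp (-((1 / 2 + 1 / (2 * (1 + γ ^ 2))) * ‖z'‖ ^ 2) - (1 / (2 * γ ^ 2)) * ‖z - z'‖ ^ 2) = rexp (-‖z'‖ ^ 2 / 2) * rexp (-‖z'‖ ^ 2 / (2 * (1 + γ ^ 2))) * rexp (-‖z - z'‖ ^ 2 / (2 * γ ^ 2)) := by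
        rw [← Real.exp_add, ← Real.exp_add]; congr 1; field_simp; ring
      have E6 : rexp (-((1 / 2) * ‖z'‖ ^ 2) - (1 / γ ^ 2) * ‖z - z'‖ ^ 2) = rexp (-‖z'‖ ^ 2 / 2) * (rexp (-‖z - z'‖ ^ 2 / (2 * γ ^ 2)) * rexp (-‖z - z'‖ ^ 2 / (2 * γ ^ 2))) := by
        rw [← Real.exp_add, ← Real.exp_add]; congr 1; field_simp; ring
      rw [E1, E2, E3, E4, E5, E6]
      ring
    rw [hfun, integral_const_mul _ _,
      integral_comb6 (aux_integrable (1 / 2) 0 (by positivity) (by positivity) z) (aux_integrable (1 / 2 + 1 / (2 * (1 + γ ^ 2))) 0 (by positivity) (by positivity) z) (aux_integrable (1 / 2 + 1 / (1 + γ ^ 2)) 0 (by positivity) (by positivity) z) (aux_integrable (1 / 2) (1 / (2 * γ ^ 2)) (by positivity) (by positivity) z) (aux_integrable (1 / 2 + 1 / (2 * (1 + γ ^ 2))) (1 / (2 * γ ^ 2)) (by positivity) (by positivity) z) (aux_integrable (1 / 2) (1 / γ ^ 2) (by positivity) (by positivity) z)]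
    rw [aux_integral (1 / 2) 0 (by positivity) (by positivity) z]
    rw [aux_integral (1 / 2 + 1 / (2 * (1 + γ ^ 2))) 0 (by positivity) (by positivity) z]
    rw [aux_integral (1 / 2 + 1 / (1 + γ ^ 2)) 0 (by positivity) (by positivity) z]
    rw [aux_integral (1 / 2) (1 / (2 * γ ^ 2)) (by positivity) (by positivity) z]
    rw [aux_integral (1 / 2 + 1 / (2 * (1 + γ ^ 2))) (1 / (2 * γ ^ 2)) (by positivity) (by positivity) z]
    rw [aux_integral (1 / 2) (1 / γ ^ 2) (by positivity) (by positivity) z]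
  rw [hstep]
  have hfun2 : (fun z : EuclideanSpace ℝ (Fin d) => N * Real.exp (-‖z‖ ^ 2 / 2) * N * ((A - B * rexp (-‖z‖ ^ 2 / (2 * (1 + γ ^ 2)))) ^ 2 * ((π / ((1 / 2) + 0)) ^ ((d : ℝ) / 2) * rexp (-((1 / 2) * 0 / ((1 / 2) + 0)) * ‖z‖ ^ 2)) + (-2 * (A - B * rexp (-‖z‖ ^ 2 / (2 * (1 + γ ^ 2)))) * B) * ((π / ((1 / 2 + 1 / (2 * (1 + γ ^ 2))) + 0)) ^ ((d : ℝ) / 2) * rexp (-((1 / 2 + 1 / (2 * (1 + γ ^ 2))) * 0 / ((1 / 2 + 1 / (2 * (1 + γ ^ 2))) + 0)) * ‖z‖ ^ 2)) + B ^ 2 * ((π / ((1 / 2 + 1 / (1 + γ ^ 2)) + 0)) ^ ((d : ℝ) / 2) * rexp (-((1 / 2 + 1 / (1 + γ ^ 2)) * 0 / ((1 / 2 + 1 / (1 + γ ^ 2)) + 0)) * ‖z‖ ^ 2)) + (2 * (A - B * rexp (-‖z‖ ^ 2 / (2 * (1 + γ ^ 2))))) * ((π / ((1 / 2) + (1 /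 (2 * γ ^ 2)))) ^ ((d : ℝ) / 2) * rexp (-((1 / 2) * (1 / (2 * γ ^ 2)) / ((1 / 2) + (1 / (2 * γ ^ 2)))) * ‖z‖ ^ 2)) + (-2 * B) * ((π / ((1 / 2 + 1 / (2 * (1 + γ ^ 2))) + (1 / (2 * γ ^ 2)))) ^ ((d : ℝ) / 2) * rexp (-((1 / 2 + 1 / (2 * (1 + γ ^ 2))) * (1 / (2 * γ ^ 2)) / ((1 / 2 + 1 / (2 * (1 + γ ^ 2))) + (1 / (2 * γ ^ 2)))) * ‖z‖ ^ 2)) + 1 * ((π / ((1 / 2) + (1 / γ ^ 2))) ^ ((d : ℝ) / 2) * rexp (-((1 / 2) * (1 / γ ^ 2) / ((1 / 2) + (1 / γ ^ 2))) * ‖z‖ ^ 2))))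
      = fun z : EuclideanSpace ℝ (Fin d) => N * N * ((A ^ 2 * (π / ((1 / 2) + 0)) ^ ((d : ℝ) / 2) - 2 * A * B * (π / ((1 / 2 + 1 / (2 * (1 + γ ^ 2))) + 0)) ^ ((d : ℝ) / 2) + B ^ 2 * (π / ((1 / 2 + 1 / (1 + γ ^ 2)) + 0)) ^ ((d : ℝ) / 2)) * rexp (-((1 / 2) * ‖z‖ ^ 2)) + (-2 * A * B * (π / ((1 / 2) + 0)) ^ ((d : ℝ) / 2) + 2 * B ^ 2 * (π / ((1 / 2 + 1 / (2 * (1 + γ ^ 2))) + 0)) ^ ((d : ℝ) / 2) + 2 * A * (π / ((1 / 2) + (1 / (2 * γ ^ 2)))) ^ ((d : ℝ) / 2)) * rexp (-((1 / 2 + 1 / (2 * (1 + γ ^ 2))) * ‖z‖ ^ 2)) + (B ^ 2 * (π / ((1 / 2) + 0)) ^ ((d : ℝ) / 2) - 2 * B * (π / ((1 / 2) + (1 / (2 * γ ^ 2)))) ^ ((d : ℝ) / 2)) * rexp (-((1 / 2 + 1 / (1 + γ ^ 2)) * ‖z‖ ^ 2)) + (-2 * B * (π / ((1 / 2 + 1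 / (2 * (1 + γ ^ 2))) + (1 / (2 * γ ^ 2)))) ^ ((d : ℝ) / 2)) * rexp (-((1 / 2 + (2 + γ ^ 2) / (2 * (1 + 3 * γ ^ 2 + γ ^ 4))) * ‖z‖ ^ 2)) + (π / ((1 / 2) + (1 / γ ^ 2))) ^ ((d : ℝ) / 2) * rexp (-((1 / 2 + 1 / (2 + γ ^ 2)) * ‖z‖ ^ 2))) := by
    funext z
    have k1 : rexp (-((1 / 2) * 0 / ((1 / 2) + 0)) * ‖z‖ ^ 2) = 1 := by norm_num
    have k2 : rexp (-((1 / 2 + 1 / (2 * (1 + γ ^ 2))) * 0 / ((1 / 2 + 1 / (2 * (1 + γ ^ 2))) + 0)) * ‖z‖ ^ 2) = 1 := by norm_num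
    have k3 : rexp (-((1 / 2 + 1 / (1 + γ ^ 2)) * 0 / ((1 / 2 + 1 / (1 + γ ^ 2)) + 0)) * ‖z‖ ^ 2) = 1 := by norm_num
    have k4 : rexp (-((1 / 2) * (1 / (2 * γ ^ 2)) / ((1 / 2) + (1 / (2 * γ ^ 2)))) * ‖z‖ ^ 2) = rexp (-‖z‖ ^ 2 / (2 * (1 + γ ^ 2))) := by
      congr 1
      rw [show (1 / 2 : ℝ) * (1 / (2 * γ ^ 2)) / (1 / 2 + 1 / (2 * γ ^ 2)) = 1 / (2 * (1 + γ ^ 2)) from by field_simp; ring]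
      ring
    have k5 : rexp (-((1 / 2 + 1 / (2 * (1 + γ ^ 2))) * (1 / (2 * γ ^ 2)) / ((1 / 2 + 1 / (2 * (1 + γ ^ 2))) + (1 / (2 * γ ^ 2)))) * ‖z‖ ^ 2) = rexp (-((2 + γ ^ 2) / (2 * (1 + 3 * γ ^ 2 + γ ^ 4)) * ‖z‖ ^ 2)) := by
      congr 1
      rw [show ((1 / 2 + 1 / (2 * (1 + γ ^ 2))) * (1 / (2 * γ ^ 2)) / (1 / 2 + 1 / (2 * (1 + γ ^ 2)) + 1 / (2 * γ ^ 2)) : ℝ) = (2 + γ ^ 2) / (2 * (1 + 3 * γ ^ 2 + γ ^ 4)) from by field_simp; ring]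
      ring
    have k6 : rexp (-((1 / 2) * (1 / γ ^ 2) / ((1 / 2) + (1 / γ ^ 2))) * ‖z‖ ^ 2) = rexp (-(1 / (2 + γ ^ 2) * ‖z‖ ^ 2)) := by
      congr 1
      rw [show (1 / 2 : ℝ) * (1 / γ ^ 2) / (1 / 2 + 1 / γ ^ 2) = 1 / (2 + γ ^ 2) from by field_simp; ring]
      ring
    have m1 : rexp (-((1 / 2) * ‖z‖ ^ 2)) = rexp (-‖z‖ ^ 2 / 2) := by
      congr 1; ring
    have m2 : rexp (-((1 / 2 + 1 / (2 * (1 + γ ^ 2))) * ‖z‖ ^ 2)) = rexp (-‖z‖ ^ 2 / 2) * rexp (-‖z‖ ^ 2 / (2 * (1 + γ ^ 2))) := by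
      rw [← Real.exp_add]; congr 1; field_simp; ring
    have m3 : rexp (-((1 / 2 + 1 / (1 + γ ^ 2)) * ‖z‖ ^ 2)) = rexp (-‖z‖ ^ 2 / 2) * (rexp (-‖z‖ ^ 2 / (2 * (1 + γ ^ 2))) * rexp (-‖z‖ ^ 2 / (2 * (1 + γ ^ 2)))) := by
      rw [← Real.exp_add, ← Real.exp_add]; congr 1; field_simp; ring
    have m4 : rexp (-((1 / 2 + (2 + γ ^ 2) / (2 * (1 + 3 * γ ^ 2 + γ ^ 4))) * ‖z‖ ^ 2)) = rexp (-‖z‖ ^ 2 / 2) * rexp (-((2 + γ ^ 2) / (2 * (1 + 3 * γ ^ 2 + γ ^ 4)) * ‖z‖ ^ 2)) := by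
      rw [← Real.exp_add]; congr 1; ring
    have m5 : rexp (-((1 / 2 + 1 / (2 + γ ^ 2)) * ‖z‖ ^ 2)) = rexp (-‖z‖ ^ 2 / 2) * rexp (-(1 / (2 + γ ^ 2) * ‖z‖ ^ 2)) := by
      rw [← Real.exp_add]; congr 1; ring
    rw [k1, k2, k3, k4, k5, k6, m1, m2, m3, m4, m5]
    ring
  rw [hfun2, integral_const_mul _ _,
    integral_comb5 (g1_integrable (1 / 2) (by positivity)) (g1_integrable (1 / 2 + 1 / (2 * (1 + γ ^ 2))) (by positivity)) (g1_integrable (1 / 2 + 1 / (1 + γ ^ 2)) (by positivity)) (g1_integrable (1 / 2 + (2 + γ ^ 2) / (2 * (1 + 3 * γ ^ 2 + γ ^ 4))) (by positivity)) (g1_integrable (1 / 2 + 1 / (2 + γ ^ 2)) (by positivity))]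
  rw [g1_integral (1 / 2) (by positivity)]
  rw [g1_integral (1 / 2 + 1 / (2 * (1 + γ ^ 2))) (by positivity)]
  rw [g1_integral (1 / 2 + 1 / (1 + γ ^ 2)) (by positivity)]
  rw [g1_integral (1 / 2 + (2 + γ ^ 2) / (2 * (1 + 3 * γ ^ 2 + γ ^ 4))) (by positivity)]
  rw [g1_integral (1 / 2 + 1 / (2 + γ ^ 2)) (by positivity)]
  have M0 : (γ ^ 2 / (2 + γ ^ 2)) ^ (d : ℝ) = (γ ^ 4 / (2 + γ ^ 2) ^ 2) ^ ((d : ℝ) / 2) := by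
    rw [show (γ ^ 4 / (2 + γ ^ 2) ^ 2 : ℝ) = (γ ^ 2 / (2 + γ ^ 2)) ^ (2 : ℕ) by rw [div_pow]; ring]
    rw [← Real.rpow_natCast (γ ^ 2 / (2 + γ ^ 2)) 2, ← Real.rpow_mul (by positivity),
      show ((2 : ℕ) : ℝ) * ((d : ℝ) / 2) = (d : ℝ) by push_cast; ring]
  have M1 : N * N * (A * A * (π / ((1 / 2) + 0)) ^ ((d : ℝ) / 2)) * (π / (1 / 2)) ^ ((d : ℝ) / 2) = (γ ^ 4 / (2 + γ ^ 2) ^ 2) ^ ((d : ℝ) / 2) := by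
    simp only [hN, hA, hB, hNval]
    simp (disch := positivity) only [← Real.mul_rpow]
    congr 1
    rw [eq_div_iff (by positivity)]
    field_simp
    ring
  have M2 : N * N * (A * B * (π / ((1 / 2 + 1 / (2 * (1 + γ ^ 2))) + 0)) ^ ((d : ℝ) / 2)) * (π / (1 / 2)) ^ ((d : ℝ) / 2) = (γ ^ 4 / (2 + γ ^ 2) ^ 2) ^ ((d : ℝ) / 2) := by
    simp only [hN, hA, hB, hNval]
    simp (disch := positivity) only [← Real.mul_rpow]
    congr 1
    rw [eq_div_iff (by positivity)]
    field_simp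
    ring
  have M3 : N * N * (B * B * (π / ((1 / 2 + 1 / (1 + γ ^ 2)) + 0)) ^ ((d : ℝ) / 2)) * (π / (1 / 2)) ^ ((d : ℝ) / 2) = (γ ^ 4 / ((1 + γ ^ 2) * (3 + γ ^ 2))) ^ ((d : ℝ) / 2) := by
    simp only [hN, hA, hB, hNval]
    simp (disch := positivity) only [← Real.mul_rpow]
    congr 1
    rw [eq_div_iff (by positivity)]
    field_simp
    ring
  have M4 : N * N * (A * B * (π / ((1 / 2) + 0)) ^ ((d : ℝ) / 2)) * (π / (1 / 2 + 1 / (2 * (1 + γ ^ 2)))) ^ ((d : ℝ) / 2) = (γ ^ 4 / (2 + γ ^ 2) ^ 2) ^ ((d : ℝ) / 2) := by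
    simp only [hN, hA, hB, hNval]
    simp (disch := positivity) only [← Real.mul_rpow]
    congr 1
    rw [eq_div_iff (by positivity)]
    field_simp
    ring
  have M5 : N * N * (B * B * (π / ((1 / 2 + 1 / (2 * (1 + γ ^ 2))) + 0)) ^ ((d : ℝ) / 2)) * (π / (1 / 2 + 1 / (2 * (1 + γ ^ 2)))) ^ ((d : ℝ) / 2) = (γ ^ 4 / (2 + γ ^ 2) ^ 2) ^ ((d : ℝ) / 2) := by
    simp only [hN, hA, hB, hNval]
    simp (disch := positivity) only [← Real.mul_rpow]
    congr 1
    rw [eq_div_iff (by positivity)]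
    field_simp
    ring
  have M6 : N * N * (A * (π / ((1 / 2) + (1 / (2 * γ ^ 2)))) ^ ((d : ℝ) / 2)) * (π / (1 / 2 + 1 / (2 * (1 + γ ^ 2)))) ^ ((d : ℝ) / 2) = (γ ^ 4 / (2 + γ ^ 2) ^ 2) ^ ((d : ℝ) / 2) := by
    simp only [hN, hA, hB, hNval]
    simp (disch := positivity) only [← Real.mul_rpow]
    congr 1
    rw [eq_div_iff (by positivity)]
    field_simp
    ring
  have M7 : N * N * (B * B * (π / ((1 / 2) + 0)) ^ ((d : ℝ) / 2)) * (π / (1 / 2 + 1 / (1 + γ ^ 2))) ^ ((d : ℝ) / 2) = (γ ^ 4 / ((1 + γ ^ 2) * (3 + γ ^ 2))) ^ ((d : ℝ) / 2) := by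
    simp only [hN, hA, hB, hNval]
    simp (disch := positivity) only [← Real.mul_rpow]
    congr 1
    rw [eq_div_iff (by positivity)]
    field_simp
    ring
  have M8 : N * N * (B * (π / ((1 / 2) + (1 / (2 * γ ^ 2)))) ^ ((d : ℝ) / 2)) * (π / (1 / 2 + 1 / (1 + γ ^ 2))) ^ ((d : ℝ) / 2) = (γ ^ 4 / ((1 + γ ^ 2) * (3 + γ ^ 2))) ^ ((d : ℝ) / 2) := by
    simp only [hN, hA, hB, hNval]
    simp (disch := positivity) only [← Real.mul_rpow]
    congr 1
    rw [eq_div_iff (by positivity)]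
    field_simp
    ring
  have M9 : N * N * (B * (π / ((1 / 2 + 1 / (2 * (1 + γ ^ 2))) + (1 / (2 * γ ^ 2)))) ^ ((d : ℝ) / 2)) * (π / (1 / 2 + (2 + γ ^ 2) / (2 * (1 + 3 * γ ^ 2 + γ ^ 4)))) ^ ((d : ℝ) / 2) = (γ ^ 4 / ((1 + γ ^ 2) * (3 + γ ^ 2))) ^ ((d : ℝ) / 2) := by
    simp only [hN, hA, hB, hNval]
    simp (disch := positivity) only [← Real.mul_rpow]
    congr 1
    rw [eq_div_iff (by positivity)]
    field_simp
    ring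
  have M10 : N * N * (π / ((1 / 2) + (1 / γ ^ 2))) ^ ((d : ℝ) / 2) * (π / (1 / 2 + 1 / (2 + γ ^ 2))) ^ ((d : ℝ) / 2) = (γ ^ 2 / (4 + γ ^ 2)) ^ ((d : ℝ) / 2) := by
    simp only [hN, hA, hB, hNval]
    simp (disch := positivity) only [← Real.mul_rpow]
    congr 1
    rw [eq_div_iff (by positivity)]
    field_simp
    ring
  linear_combination M1 - 2 * M2 + M3 - 2 * M4 + 2 * M5 + 2 * M6 + M7 - 2 * M8 - 2 * M9 + M10 - M0
end

section
/- Let Ψ^P(t) = exp(-‖t‖²/2) and Ψ^{Q_n}(t) = (1/n)Σ_{i=1}^n exp(i t·z_j) be the empirical characteristic function of points z_1,...,z_n ∈ ℝ^d. With weight φ_β(t) = (2πβ²)^{-d/2}exp(-‖t‖²/(2β²)), the BHEP statistic W_{n,β} = ∫_{ℝ^d} |Ψ^P(t) - Ψ^{Q_n}(t)|² φ_β(t) dt equals the biased MMD estimator with Gaussian RBF kernel of width γ = 1/β: W_{n,β} = (γ²/(2+γ²))^{d/2} - (2/n)(γ²/(1+γ²))^{d/2}Σ_i exp(-‖z_i‖²/(2(1+γ²)))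 + (1/n²)Σ_{i,j} exp(-‖z_i-z_j‖²/(2γ²)) where γ = 1/β. -/
set_option maxHeartbeats 1000000

open MeasureTheory Real

lemma helper_intble {d : ℕ} (b : ℝ) (hb : 0 < b) (c : ℂ) (w : EuclideanSpace ℝ (Fin d)) :
    Integrable (fun t : EuclideanSpace ℝ (Fin d) =>
      Complex.exp (-(b : ℂ) * ‖t‖ ^ 2 + c * ((inner ℝ w t : ℝ) : ℂ))) := by
  exact GaussianFourier.integrable_cexp_neg_mul_sq_norm_add (by simpa using hb) c w

lemma helper_int {d : ℕ} (b : ℝ) (hb : 0 < b) (c : ℂ) (hc : c ^ 2 = -1)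
    (w : EuclideanSpace ℝ (Fin d)) :
    (∫ t : EuclideanSpace ℝ (Fin d),
        Complex.exp (-(b : ℂ) * ‖t‖ ^ 2 + c * ((inner ℝ w t : ℝ) : ℂ)))
      = (((π / b) ^ ((d : ℝ) / 2) * Real.exp (-‖w‖ ^ 2 / (4 * b)) : ℝ) : ℂ) := by
  rw [GaussianFourier.integral_cexp_neg_mul_sq_norm_add (by simpa using hb) c w]
  rw [hc, finrank_euclideanSpace_fin]
  have h1 : ((π : ℂ) / b) ^ ((d : ℂ) / 2) = (((π / b) ^ ((d : ℝ) / 2) : ℝ) : ℂ) := by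
    rw [Complex.ofReal_cpow (by positivity)]
    push_cast
    ring_nf
  rw [h1]
  rw [show (-1 : ℂ) * (‖w‖ : ℂ) ^ 2 / (4 * b) = ((-‖w‖ ^ 2 / (4 * b) : ℝ) : ℂ) by push_cast; ring]
  rw [← Complex.ofReal_exp]
  push_cast
  ring

lemma expand_aux {n : ℕ} (E1 E2 Kc ν : ℂ) (c cb : Fin n → ℂ) :
    (E1 - ν * ∑ j, c j) * (E1 - ν * ∑ j, cb j) * (Kc * E2)
      = Kc * (E1 * E1 * E2) - Kc * ν * ∑ j, E1 * E2 * cb j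
        - Kc * ν * ∑ j, E1 * E2 * c j
        + Kc * ν ^ 2 * ∑ j, ∑ k, E2 * c j * cb k := by
  have h1 : ∀ f : Fin n → ℂ, ∑ j, E1 * E2 * f j = E1 * E2 * ∑ j, f j :=
    fun f => (Finset.mul_sum _ _ _).symm
  have h2 : ∑ j, ∑ k, E2 * c j * cb k = E2 * ((∑ j, c j) * (∑ k, cb k)) := by
    rw [Finset.sum_mul_sum, Finset.mul_sum]
    refine Finset.sum_congr rfl fun j _ => ?_
    rw [Finset.mul_sum]
    exact Finset.sum_congr rfl fun k _ => by ring
  rw [h1, h1, h2]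
  ring

/-- The BHEP statistic `W_{n,β} = ∫ |Ψ^P(t) - Ψ^{Q_n}(t)|² φ_β(t) dt` equals the
biased Gaussian-RBF MMD estimator with kernel width `γ = 1/β`. -/
theorem bhep_eq_mmd_biased (d n : ℕ) (hd : 1 ≤ d) (hn : 1 ≤ n) (β γ : ℝ) (hβ : 0 < β)
    (hγ : γ = 1 / β) (z : Fin n → EuclideanSpace ℝ (Fin d)) :
    (∫ t : EuclideanSpace ℝ (Fin d),
        (‖((Real.exp (-‖t‖ ^ 2 / 2) : ℝ)
            - (1 / (n : ℂ)) * ∑ j, Complex.exp (Complex.I * ((inner ℝ t (z j) : ℝ) : ℂ)))‖) ^ 2 *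
          ((2 * π * β ^ 2) ^ (-(d : ℝ) / 2) * Real.exp (-‖t‖ ^ 2 / (2 * β ^ 2))))
      = (γ ^ 2 / (2 + γ ^ 2)) ^ ((d : ℝ) / 2)
        - (2 / n) * (γ ^ 2 / (1 + γ ^ 2)) ^ ((d : ℝ) / 2) *
            ∑ i, Real.exp (-‖z i‖ ^ 2 / (2 * (1 + γ ^ 2)))
        + (1 / (n : ℝ) ^ 2) * ∑ i, ∑ j,
            Real.exp (-‖z i - z j‖ ^ 2 / (2 * γ ^ 2)) := by
  have hβ2 : (0:ℝ) < β ^ 2 := by positivity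
  have hn0 : (n:ℝ) ≠ 0 := Nat.cast_ne_zero.mpr (by omega)
  set s : ℝ := 1 / (2 * β ^ 2) with hs
  have hs0 : 0 < s := by positivity
  set K : ℝ := (2 * π * β ^ 2) ^ (-(d:ℝ)/2) with hKdef
  set g1 : EuclideanSpace ℝ (Fin d) → ℂ := fun t =>
    Complex.exp (-((1 + s : ℝ) : ℂ) * ‖t‖ ^ 2 + Complex.I * ((inner ℝ (0:EuclideanSpace ℝ (Fin d)) t : ℝ) : ℂ)) with hg1def
  set g2p : Fin n → EuclideanSpace ℝ (Fin d) → ℂ := fun j t =>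
    Complex.exp (-((1/2 + s : ℝ) : ℂ) * ‖t‖ ^ 2 + Complex.I * ((inner ℝ (z j) t : ℝ) : ℂ)) with hg2pdef
  set g2m : Fin n → EuclideanSpace ℝ (Fin d) → ℂ := fun j t =>
    Complex.exp (-((1/2 + s : ℝ) : ℂ) * ‖t‖ ^ 2 + (-Complex.I) * ((inner ℝ (z j) t : ℝ) : ℂ)) with hg2mdef
  set g3 : Fin n → Fin n → EuclideanSpace ℝ (Fin d) → ℂ := fun j k t =>
    Complex.exp (-((s : ℝ) : ℂ) * ‖t‖ ^ 2 + Complex.I * ((inner ℝ (z j - z k) t : ℝ) : ℂ)) with hg3def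
  have hx : ∀ t : EuclideanSpace ℝ (Fin d),
      ((((‖((Real.exp (-‖t‖ ^ 2 / 2) : ℝ)
            - (1 / (n : ℂ)) * ∑ j, Complex.exp (Complex.I * ((inner ℝ t (z j) : ℝ) : ℂ)))‖) ^ 2 *
          (K * Real.exp (-‖t‖ ^ 2 / (2 * β ^ 2)))) : ℝ) : ℂ)
      = (K : ℂ) * g1 t - (K : ℂ) * (1/(n:ℂ)) * ∑ j, g2m j t
          - (K : ℂ) * (1/(n:ℂ)) * ∑ j, g2p j t
          + (K : ℂ) * (1/(n:ℂ))^2 * ∑ j, ∑ k, g3 j k t := by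
    intro t
    set a : ℂ := ((Real.exp (-‖t‖ ^ 2 / 2) : ℝ) : ℂ) with ha
    set b : ℂ := (1 / (n : ℂ)) * ∑ j, Complex.exp (Complex.I * ((inner ℝ t (z j) : ℝ) : ℂ)) with hb
    have habs : (((‖a - b‖) ^ 2 : ℝ) : ℂ) = (a - b) * (starRingEnd ℂ) (a - b) := by
      rw [Complex.sq_norm, Complex.mul_conj]
    rw [Complex.ofReal_mul, habs, Complex.ofReal_mul]
    have hconj : (starRingEnd ℂ) (a - b)
        = a - (1 / (n : ℂ)) * ∑ j, Complex.exp (-Complex.I * ((inner ℝ t (z j) : ℝ) : ℂ)) := by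
      rw [ha, hb]
      simp only [map_sub, map_mul, map_sum, map_div₀, map_one, map_natCast,
        Complex.conj_ofReal, ← Complex.exp_conj, Complex.conj_I]
    rw [hconj]
    have e1 : a = Complex.exp ((-‖t‖ ^ 2 / 2 : ℝ) : ℂ) := by rw [ha, Complex.ofReal_exp]
    have hE2 : ((Real.exp (-‖t‖ ^ 2 / (2 * β ^ 2)) : ℝ) : ℂ)
        = Complex.exp ((-‖t‖ ^ 2 / (2 * β ^ 2) : ℝ) : ℂ) := by rw [Complex.ofReal_exp]
    have hβc : (β:ℂ) ≠ 0 := by exact_mod_cast hβ.ne'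
    have hg1' : g1 t = Complex.exp ((-‖t‖ ^ 2 / 2 : ℝ) : ℂ) * Complex.exp ((-‖t‖ ^ 2 / 2 : ℝ) : ℂ)
        * Complex.exp ((-‖t‖ ^ 2 / (2 * β ^ 2) : ℝ) : ℂ) := by
      simp only [hg1def]
      rw [← Complex.exp_add, ← Complex.exp_add]
      congr 1
      simp only [inner_zero_left, hs]
      push_cast
      field_simp
      ring
    have hg2p' : ∀ j, g2p j t = Complex.exp ((-‖t‖ ^ 2 / 2 : ℝ) : ℂ)
        * Complex.exp ((-‖t‖ ^ 2 / (2 * β ^ 2) : ℝ) : ℂ)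
        * Complex.exp (Complex.I * ((inner ℝ t (z j) : ℝ) : ℂ)) := by
      intro j
      simp only [hg2pdef]
      rw [← Complex.exp_add, ← Complex.exp_add]
      congr 1
      rw [real_inner_comm]
      push_cast [hs]
      field_simp
      ring
    have hg2m' : ∀ j, g2m j t = Complex.exp ((-‖t‖ ^ 2 / 2 : ℝ) : ℂ)
        * Complex.exp ((-‖t‖ ^ 2 / (2 * β ^ 2) : ℝ) : ℂ)
        * Complex.exp (-Complex.I * ((inner ℝ t (z j) : ℝ) : ℂ)) := by
      intro j
      simp only [hg2mdef]
      rw [← Complex.exp_add, ← Complex.exp_add]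
      congr 1
      rw [real_inner_comm]
      push_cast [hs]
      field_simp
      ring
    have hg3' : ∀ j k, g3 j k t = Complex.exp ((-‖t‖ ^ 2 / (2 * β ^ 2) : ℝ) : ℂ)
        * Complex.exp (Complex.I * ((inner ℝ t (z j) : ℝ) : ℂ))
        * Complex.exp (-Complex.I * ((inner ℝ t (z k) : ℝ) : ℂ)) := by
      intro j k
      simp only [hg3def]
      rw [← Complex.exp_add, ← Complex.exp_add]
      congr 1
      rw [inner_sub_left, real_inner_comm (z j) t, real_inner_comm (z k) t]
      push_cast [hs]
      field_simp
      ring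
    simp only [hg1', hg2p', hg2m', hg3', e1, hE2, hb]
    rw [expand_aux]
  have hI1 : Integrable g1 := by
    rw [hg1def]; exact helper_intble (1+s) (by positivity) _ _
  have hI2p : ∀ j, Integrable (g2p j) := by
    intro j; rw [hg2pdef]; exact helper_intble (1/2+s) (by positivity) _ _
  have hI2m : ∀ j, Integrable (g2m j) := by
    intro j; rw [hg2mdef]; exact helper_intble (1/2+s) (by positivity) _ _
  have hI3 : ∀ j k, Integrable (g3 j k) := by
    intro j k; rw [hg3def]; exact helper_intble s hs0 _ _
  have hIA : Integrable (fun t => (K:ℂ) * g1 t) := hI1.const_mul _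
  have hIB : Integrable (fun t => (K:ℂ) * (1/(n:ℂ)) * ∑ j, g2m j t) :=
    (integrable_finset_sum _ (fun j _ => hI2m j)).const_mul _
  have hIC : Integrable (fun t => (K:ℂ) * (1/(n:ℂ)) * ∑ j, g2p j t) :=
    (integrable_finset_sum _ (fun j _ => hI2p j)).const_mul _
  have hID : Integrable (fun t => (K:ℂ) * (1/(n:ℂ))^2 * ∑ j, ∑ k, g3 j k t) :=
    (integrable_finset_sum _ (fun j _ =>
      integrable_finset_sum _ (fun k _ => hI3 j k))).const_mul _
  have hIAB : Integrable (fun t => (K:ℂ) * g1 t - (K:ℂ) * (1/(n:ℂ)) * ∑ j, g2m j t) := by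
    exact hIA.sub hIB
  have hIABC : Integrable (fun t => (K:ℂ) * g1 t - (K:ℂ) * (1/(n:ℂ)) * ∑ j, g2m j t
      - (K:ℂ) * (1/(n:ℂ)) * ∑ j, g2p j t) := by
    exact hIAB.sub hIC
  have hC : (∫ t : EuclideanSpace ℝ (Fin d),
      ((((‖((Real.exp (-‖t‖ ^ 2 / 2) : ℝ)
            - (1 / (n : ℂ)) * ∑ j, Complex.exp (Complex.I * ((inner ℝ t (z j) : ℝ) : ℂ)))‖) ^ 2 *
          (K * Real.exp (-‖t‖ ^ 2 / (2 * β ^ 2)))) : ℝ) : ℂ))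
      = (((γ ^ 2 / (2 + γ ^ 2)) ^ ((d : ℝ) / 2)
        - (2 / n) * (γ ^ 2 / (1 + γ ^ 2)) ^ ((d : ℝ) / 2) *
            ∑ i, Real.exp (-‖z i‖ ^ 2 / (2 * (1 + γ ^ 2)))
        + (1 / (n : ℝ) ^ 2) * ∑ i, ∑ j,
            Real.exp (-‖z i - z j‖ ^ 2 / (2 * γ ^ 2)) : ℝ) : ℂ) := by
    rw [integral_congr_ae (Filter.Eventually.of_forall hx)]
    rw [integral_add hIABC hID, integral_sub hIAB hIC,
      integral_sub hIA hIB, integral_const_mul, integral_const_mul, integral_const_mul,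
      integral_const_mul]
    rw [integral_finset_sum _ (fun j _ => hI2m j), integral_finset_sum _ (fun j _ => hI2p j)]
    rw [integral_finset_sum _ (fun j _ => integrable_finset_sum _ (fun k _ => hI3 j k))]
    have e1 : ∫ t, g1 t = (((π / (1+s)) ^ ((d : ℝ) / 2)
        * Real.exp (-‖(0:EuclideanSpace ℝ (Fin d))‖ ^ 2 / (4 * (1+s))) : ℝ) : ℂ) := by
      rw [hg1def]; exact helper_int (1+s) (by positivity) _ Complex.I_sq _
    have e2p : ∀ j, ∫ t, g2p j t = (((π / (1/2+s)) ^ ((d : ℝ) / 2)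
        * Real.exp (-‖z j‖ ^ 2 / (4 * (1/2+s))) : ℝ) : ℂ) := by
      intro j; rw [hg2pdef]; exact helper_int (1/2+s) (by positivity) _ Complex.I_sq _
    have e2m : ∀ j, ∫ t, g2m j t = (((π / (1/2+s)) ^ ((d : ℝ) / 2)
        * Real.exp (-‖z j‖ ^ 2 / (4 * (1/2+s))) : ℝ) : ℂ) := by
      intro j; rw [hg2mdef]
      exact helper_int (1/2+s) (by positivity) _ (by rw [neg_sq, Complex.I_sq]) _
    have e3 : ∀ j k, ∫ t, g3 j k t = (((π / s) ^ ((d : ℝ) / 2)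
        * Real.exp (-‖z j - z k‖ ^ 2 / (4 * s)) : ℝ) : ℂ) := by
      intro j k; rw [hg3def]; exact helper_int s hs0 _ Complex.I_sq _
    simp only [e1, e2p, e2m, e3]
    have hD : (∑ x : Fin n, ∫ a : EuclideanSpace ℝ (Fin d), ∑ k : Fin n, g3 x k a)
        = ∑ x : Fin n, ∑ k : Fin n, ∫ a : EuclideanSpace ℝ (Fin d), g3 x k a :=
      Finset.sum_congr rfl fun j _ => integral_finset_sum _ fun k _ => hI3 j k
    rw [hD]
    simp only [e3]
    have hbase : ∀ x y : ℝ, 0 < x → π / x / (2*π*β^2) = y →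
        K * (π/x)^((d:ℝ)/2) = y^((d:ℝ)/2) := by
      intro x y hx hxy
      rw [hKdef, neg_div, Real.rpow_neg (by positivity), ← hxy]
      conv_rhs => rw [Real.div_rpow (by positivity) (by positivity)]
      ring
    have hb1 : K * (π/(1+s))^((d:ℝ)/2) = (γ^2/(2+γ^2))^((d:ℝ)/2) :=
      hbase (1+s) _ (by positivity)
        (by rw [hγ, hs]; field_simp [Real.pi_ne_zero, hβ.ne'])
    have hb2 : K * (π/(1/2+s))^((d:ℝ)/2) = (γ^2/(1+γ^2))^((d:ℝ)/2) :=
      hbase (1/2+s) _ (by positivity)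
        (by rw [hγ, hs]; field_simp [Real.pi_ne_zero, hβ.ne'])
    have hb3 : K * (π/s)^((d:ℝ)/2) = 1 := by
      rw [hbase s 1 hs0 (by rw [hs]; field_simp [Real.pi_ne_zero, hβ.ne'])]
      exact Real.one_rpow _
    have harg2 : (4*(1/2+s) : ℝ) = 2*(1+γ^2) := by
      rw [hγ, hs]; field_simp; ring
    have harg3 : (4*s : ℝ) = 2*γ^2 := by
      rw [hγ, hs]; field_simp; ring
    have key : K * ((π / (1 + s)) ^ ((d:ℝ) / 2)
          * rexp (-‖(0 : EuclideanSpace ℝ (Fin d))‖ ^ 2 / (4 * (1 + s))))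
        - K * (1/(n:ℝ)) * (∑ x : Fin n,
            (π / (1 / 2 + s)) ^ ((d:ℝ) / 2) * rexp (-‖z x‖ ^ 2 / (4 * (1 / 2 + s))))
        - K * (1/(n:ℝ)) * (∑ x : Fin n,
            (π / (1 / 2 + s)) ^ ((d:ℝ) / 2) * rexp (-‖z x‖ ^ 2 / (4 * (1 / 2 + s))))
        + K * (1/(n:ℝ)) ^ 2 * (∑ x : Fin n, ∑ y : Fin n,
            (π / s) ^ ((d:ℝ) / 2) * rexp (-‖z x - z y‖ ^ 2 / (4 * s)))
        = (γ ^ 2 / (2 + γ ^ 2)) ^ ((d : ℝ) / 2)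
          - (2 / n) * (γ ^ 2 / (1 + γ ^ 2)) ^ ((d : ℝ) / 2) *
              ∑ i, Real.exp (-‖z i‖ ^ 2 / (2 * (1 + γ ^ 2)))
          + (1 / (n : ℝ) ^ 2) * ∑ i, ∑ j,
              Real.exp (-‖z i - z j‖ ^ 2 / (2 * γ ^ 2)) := by
      rw [show rexp (-‖(0 : EuclideanSpace ℝ (Fin d))‖ ^ 2 / (4 * (1 + s))) = 1 by simp]
      simp only [harg2, harg3]
      simp only [← Finset.mul_sum]
      linear_combination hb1
        - (2 * (∑ x : Fin n, rexp (-‖z x‖ ^ 2 / (2 * (1 + γ ^ 2)))) / (n:ℝ)) * hb2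
        + ((∑ x : Fin n, ∑ y : Fin n, rexp (-‖z x - z y‖ ^ 2 / (2 * γ ^ 2))) / (n:ℝ) ^ 2) * hb3
    rw [← key]
    push_cast
    ring
  rw [integral_complex_ofReal] at hC
  exact_mod_cast hC
end

section
/- The variance Var(γ,d,n) = (2/(n(n-1)))[(γ²/(2+γ²))^d + (γ²/(4+γ²))^{d/2} - 2(γ⁴/((1+γ²)(3+γ²)))^{d/2}] is strictly positive for all γ > 0, d ≥ 1, n ≥ 2. -/
open Real

private lemma sq_rpow_half (x s : ℝ) (hx : 0 ≤ x) : (x ^ 2) ^ (s / 2) = x ^ s := by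
  rw [show (x ^ 2 : ℝ) = x ^ (2:ℝ) by
        rw [show ((2:ℝ)) = ((2:ℕ):ℝ) by norm_num, Real.rpow_natCast],
      ← Real.rpow_mul hx]
  congr 1
  ring

private lemma rpow_half_sq (x s : ℝ) (hx : 0 ≤ x) : (x ^ (s / 2)) ^ 2 = x ^ s := by
  rw [← Real.rpow_natCast (x ^ (s/2)) 2, ← Real.rpow_mul hx]
  congr 1
  push_cast
  ring

/-- The null variance
`Var(γ,d,n) = (2/(n(n-1)))[(γ²/(2+γ²))^d + (γ²/(4+γ²))^{d/2} - 2(γ⁴/((1+γ²)(3+γ²)))^{d/2}]`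
is strictly positive for `γ > 0`, `d ≥ 1`, `n ≥ 2`. -/
theorem mmd_null_variance_pos (γ : ℝ) (hγ : 0 < γ) (d n : ℕ) (hd : 1 ≤ d) (hn : 2 ≤ n) :
    0 < (2 / ((n : ℝ) * ((n : ℝ) - 1))) *
        ((γ ^ 2 / (2 + γ ^ 2)) ^ (d : ℝ) + (γ ^ 2 / (4 + γ ^ 2)) ^ ((d : ℝ) / 2)
          - 2 * (γ ^ 4 / ((1 + γ ^ 2) * (3 + γ ^ 2))) ^ ((d : ℝ) / 2)) := by
  have hn2 : (2:ℝ) ≤ (n:ℝ) := by exact_mod_cast hn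
  have hfac : 0 < 2 / ((n : ℝ) * ((n : ℝ) - 1)) := by
    apply div_pos (by norm_num)
    nlinarith
  refine mul_pos hfac ?_
  set a : ℝ := γ ^ 2 / (2 + γ ^ 2) with ha
  set b : ℝ := γ ^ 2 / (4 + γ ^ 2) with hb
  set z : ℝ := γ ^ 4 / ((1 + γ ^ 2) * (3 + γ ^ 2)) with hz
  have ha0 : 0 < a := by positivity
  have hb0 : 0 < b := by positivity
  have hz0 : 0 < z := by positivity
  set t : ℝ := (d:ℝ)/2 with htdef
  have hA : a ^ (d:ℝ) = (a^2) ^ t := (sq_rpow_half a (d:ℝ) ha0.le).symm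
  have hkey : z ^ 2 < a ^ 2 * b := by
    rw [ha, hb, hz, div_pow, div_pow, div_mul_div_comm,
        div_lt_div_iff₀ (by positivity) (by positivity)]
    nlinarith [pow_pos hγ 6, pow_pos hγ 8, pow_pos hγ 10]
  have main : 2 * z ^ t < (a^2) ^ t + b ^ t := by
    have h1 : z ^ t = (z^2) ^ (t/2) := (sq_rpow_half z t hz0.le).symm
    have h2 : (z^2) ^ (t/2) < (a^2*b) ^ (t/2) := by
      have hd' : (0:ℝ) < (d:ℝ) := by exact_mod_cast hd
      exact Real.rpow_lt_rpow (by positivity) hkey (by positivity)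
    have h3 : (a^2*b) ^ (t/2) = (a^2)^(t/2) * b^(t/2) :=
      Real.mul_rpow (by positivity) hb0.le
    have h4 : 2 * ((a^2)^(t/2) * b^(t/2)) ≤ ((a^2)^(t/2))^2 + (b^(t/2))^2 := by
      nlinarith [sq_nonneg ((a^2)^(t/2) - b^(t/2))]
    have h5 : ((a^2)^(t/2))^2 = (a^2)^t := rpow_half_sq (a^2) t (by positivity)
    have h6 : (b^(t/2))^2 = b^t := rpow_half_sq b t hb0.le
    calc 2 * z ^ t = 2 * (z^2) ^ (t/2) := by rw [h1]
      _ < 2 * (a^2*b) ^ (t/2) := by linarith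
      _ = 2 * ((a^2)^(t/2) * b^(t/2)) := by rw [h3]
      _ ≤ (a^2)^t + b^t := by rw [← h5, ← h6]; exact h4
  rw [hA]
  linarith
end
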